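/- arXiv:1907.05835 — 5 statements merged into one kernel-verified Lean document; each statement's English description precedes it below -/
import Mathlib

section
/- For any finite nonempty set F ⊂ ℕ with maximum element j, the product function f = ∏_{m ∈ F} u_m on the Cantor space has Lipschitz constant exactly 2^(j+1). -/
open scoped ENNReal

abbrev Cantor : Type := ℕ → Fin 2

noncomputable def u (n : ℕ) (x : Cantor) : ℂ := 2 * ((x n : ℕ) : ℂ) - 1

noncomputable def firstDiff (x y : Cantor) (h : x ≠ y) : ℕ :=
  Nat.find (Function.ne_iff.mp h)

open Classical in
noncomputable def dC (x y : Cantor) : ℝ≥0∞ :=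
  if h : x = y then 0 else 2⁻¹ ^ firstDiff x y h

noncomputable def LipC (f : Cantor → ℂ) : ℝ≥0∞ :=
  ⨆ (x : Cantor) (y : Cantor) (_ : x ≠ y),
    ENNReal.ofReal ‖f x - f y‖ / dC x y

lemma u_pm (n : ℕ) (x : Cantor) : u n x = 1 ∨ u n x = -1 := by
  have h : (x n : ℕ) = 0 ∨ (x n : ℕ) = 1 := by have := (x n).is_lt; omega
  rcases h with h | h
  · right; simp [u, h]
  · left; simp [u, h]; ring

lemma prod_u_pm (F : Finset ℕ) (x : Cantor) :
    (∏ m ∈ F, u m x) = 1 ∨ (∏ m ∈ F, u m x) = -1 := by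
  induction F using Finset.induction with
  | empty => simp
  | @insert a s h ih =>
    rw [Finset.prod_insert h]
    rcases u_pm a x with h1 | h1 <;> rcases ih with h2 | h2 <;> simp [h1, h2]

lemma abs_prod_diff (F : Finset ℕ) (x y : Cantor)
    (h : (∏ m ∈ F, u m x) ≠ ∏ m ∈ F, u m y) :
    ‖(∏ m ∈ F, u m x) - ∏ m ∈ F, u m y‖ = 2 := by
  rcases prod_u_pm F x with h1 | h1 <;> rcases prod_u_pm F y with h2 | h2 <;>
    rw [h1, h2] at h ⊢ <;> first | (exact absurd rfl h) | norm_num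

lemma two_div_inv_pow (n : ℕ) : (2 : ℝ≥0∞) / 2⁻¹ ^ n = 2 ^ (n + 1) := by
  rw [div_eq_mul_inv, ← ENNReal.inv_pow, inv_inv, pow_succ]
  ring

theorem lip_prod_u (F : Finset ℕ) (hF : F.Nonempty) :
    LipC (fun x => ∏ m ∈ F, u m x) = 2 ^ (F.max' hF + 1) := by
  set j := F.max' hF with hj
  apply le_antisymm
  · apply iSup_le; intro x; apply iSup_le; intro y; apply iSup_le; intro hxy
    by_cases hfe : (∏ m ∈ F, u m x) = ∏ m ∈ F, u m y
    · simp [hfe]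
    · simp only
      rw [abs_prod_diff F x y hfe]
      have hm : ∃ m ∈ F, x m ≠ y m := by
        by_contra hc
        push_neg at hc
        exact hfe (Finset.prod_congr rfl fun m hmF => by rw [u, u, hc m hmF])
      obtain ⟨m, hmF, hm⟩ := hm
      have hfd : firstDiff x y hxy ≤ j :=
        le_trans (Nat.find_min' _ hm) (F.le_max' m hmF)
      rw [dC, dif_neg hxy]
      have h2 : (ENNReal.ofReal 2) = 2 := by norm_num
      rw [h2, two_div_inv_pow]
      exact pow_le_pow_right₀ one_le_two (by omega)
  · set x0 : Cantor := fun _ => 0 with hx0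
    set y0 : Cantor := Function.update x0 j 1 with hy0
    have hne : x0 ≠ y0 := by
      intro h
      have := congrFun h j
      simp [hy0, Function.update_self, hx0] at this
    have hfd : firstDiff x0 y0 hne = j := by
      rw [firstDiff, Nat.find_eq_iff]
      refine ⟨by simp [hy0, Function.update_self, hx0], ?_⟩
      intro i hi hne'
      exact hne' (by simp [hy0, Function.update_of_ne (Nat.ne_of_lt hi)])
    have hjF : j ∈ F := F.max'_mem hF
    have hprod : ∀ z : Cantor, (∏ m ∈ F, u m z) = (∏ m ∈ F.erase j, u m z) * u j z :=
      fun z => (Finset.prod_erase_mul F _ hjF).symm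
    have hPeq : (∏ m ∈ F.erase j, u m x0) = ∏ m ∈ F.erase j, u m y0 := by
      refine Finset.prod_congr rfl fun m hm => ?_
      have hmj : m ≠ j := Finset.ne_of_mem_erase hm
      simp [u, hy0, Function.update_of_ne hmj]
    have hux : u j x0 = -1 := by simp [u, hx0]
    have huy : u j y0 = 1 := by simp [u, hy0]; ring
    have habs : ‖(∏ m ∈ F, u m x0) - ∏ m ∈ F, u m y0‖ = 2 := by
      rw [hprod x0, hprod y0, ← hPeq, hux, huy]
      rcases prod_u_pm (F.erase j) x0 with h | h <;> rw [h] <;> norm_num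
    have hkey : (2 : ℝ≥0∞) ^ (j + 1) ≤
        ENNReal.ofReal ‖(∏ m ∈ F, u m x0) - ∏ m ∈ F, u m y0‖ / dC x0 y0 := by
      rw [habs, dC, dif_neg hne, hfd]
      have h2 : (ENNReal.ofReal 2) = 2 := by norm_num
      rw [h2, two_div_inv_pow]
    exact hkey.trans (le_iSup_of_le x0 (le_iSup_of_le y0 (le_iSup_of_le hne le_rfl)))
end

section
/- Fix x ≠ y in 𝒞 with first disagreement index k, and fix n > k. Let C_k be the set of nonempty subsets F ⊆ {0,...,n-1} with max F > k. Let C_k' = {F ∈ C_k : (∏_{m∈F}u_m)(x) ≠ (∏_{m∈F}u_m)(y)} and C_k'' = C_k \ C_k'. Then the map F ↦ F △ {k} is a well-defined bijection from C_k' to C_k''; in particular |C_k'| = |C_k''| = 2^(n-1) - 2^k. -/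
open scoped ENNReal

lemma u_cases (m : ℕ) (x : Cantor) : u m x = 1 ∨ u m x = -1 := by
  have h := (x m).isLt
  have h' : ((x m : ℕ)) = 0 ∨ ((x m : ℕ)) = 1 := by omega
  rcases h' with h' | h' <;> [right; left] <;> simp [u, h'] <;> ring

lemma u_sq (m : ℕ) (x : Cantor) : u m x * u m x = 1 := by
  rcases u_cases m x with h | h <;> rw [h] <;> ring

lemma u_ne_zero (m : ℕ) (x : Cantor) : u m x ≠ 0 := by
  rcases u_cases m x with h | h <;> rw [h] <;> norm_num

lemma u_neg {x y : Cantor} {k : ℕ} (h : x k ≠ y k) : u k x = - u k y := by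
  have hx := (x k).isLt
  have hy := (y k).isLt
  have hne : ((x k : ℕ)) ≠ ((y k : ℕ)) := fun hc => h (Fin.ext hc)
  have hx' : ((x k : ℕ)) = 0 ∨ ((x k : ℕ)) = 1 := by omega
  have hy' : ((y k : ℕ)) = 0 ∨ ((y k : ℕ)) = 1 := by omega
  rcases hx' with h1 | h1 <;> rcases hy' with h2 | h2 <;>
    simp_all [u] <;> ring

lemma prod_u_sq (F : Finset ℕ) (x : Cantor) :
    (∏ m ∈ F, u m x) * (∏ m ∈ F, u m x) = 1 := by
  rw [← Finset.prod_mul_distrib]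
  exact Finset.prod_eq_one fun m _ => u_sq m x

lemma prod_symmDiff (F : Finset ℕ) (k : ℕ) (x : Cantor) :
    ∏ m ∈ symmDiff F {k}, u m x = u k x * ∏ m ∈ F, u m x := by
  classical
  by_cases hk : k ∈ F
  · have h1 : symmDiff F {k} = F.erase k := by
      ext a
      simp only [Finset.mem_symmDiff, Finset.mem_singleton, Finset.mem_erase]
      constructor
      · rintro (⟨h, hne⟩ | ⟨rfl, hne⟩) <;> tauto
      · rintro ⟨hne, h⟩; tauto
    rw [h1, ← Finset.mul_prod_erase F (fun m => u m x) hk, ← mul_assoc, u_sq,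
      one_mul]
  · have h1 : symmDiff F {k} = insert k F := by
      ext a
      simp only [Finset.mem_symmDiff, Finset.mem_singleton, Finset.mem_insert]
      constructor
      · rintro (⟨h, hne⟩ | ⟨rfl, hne⟩) <;> tauto
      · rintro (rfl | h)
        · exact Or.inr ⟨rfl, hk⟩
        · exact Or.inl ⟨h, fun hc => hk (hc ▸ h)⟩
    rw [h1, Finset.prod_insert hk]

lemma lt_max_iff' {k : ℕ} {F : Finset ℕ} :
    (k : WithBot ℕ) < F.max ↔ ∃ m ∈ F, k < m := by
  rw [← not_le, Finset.max_le_iff]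
  push_neg
  exact exists_congr fun m => and_congr_right fun _ => WithBot.coe_lt_coe

theorem symmDiff_bijOn (x y : Cantor) (hxy : x ≠ y) (n : ℕ)
    (hn : firstDiff x y hxy < n) :
    Set.BijOn (fun F => symmDiff F {firstDiff x y hxy})
      {F : Finset ℕ | F ⊆ Finset.range n ∧ (firstDiff x y hxy : WithBot ℕ) < F.max ∧
        (∏ m ∈ F, u m x) ≠ ∏ m ∈ F, u m y}
      {F : Finset ℕ | F ⊆ Finset.range n ∧ (firstDiff x y hxy : WithBot ℕ) < F.max ∧
        (∏ m ∈ F, u m x) = ∏ m ∈ F, u m y} ∧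
    {F : Finset ℕ | F ⊆ Finset.range n ∧ (firstDiff x y hxy : WithBot ℕ) < F.max ∧
        (∏ m ∈ F, u m x) ≠ ∏ m ∈ F, u m y}.ncard
      = 2 ^ (n - 1) - 2 ^ firstDiff x y hxy ∧
    {F : Finset ℕ | F ⊆ Finset.range n ∧ (firstDiff x y hxy : WithBot ℕ) < F.max ∧
        (∏ m ∈ F, u m x) = ∏ m ∈ F, u m y}.ncard
      = 2 ^ (n - 1) - 2 ^ firstDiff x y hxy := by
  classical
  set k := firstDiff x y hxy with hkdef
  have hk : x k ≠ y k := Nat.find_spec (Function.ne_iff.mp hxy)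
  have hneg : u k x = - u k y := u_neg hk
  have hy0 : u k y ≠ 0 := u_ne_zero k y
  -- the flip lemma
  have hflip : ∀ F : Finset ℕ,
      ((∏ m ∈ symmDiff F {k}, u m x) = ∏ m ∈ symmDiff F {k}, u m y) ↔
      ((∏ m ∈ F, u m x) ≠ ∏ m ∈ F, u m y) := by
    intro F
    rw [prod_symmDiff, prod_symmDiff, hneg]
    rcases mul_self_eq_one_iff.mp (prod_u_sq F x) with ha | ha <;>
      rcases mul_self_eq_one_iff.mp (prod_u_sq F y) with hb | hb <;>
      rw [ha, hb] <;> constructor <;> intro h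
    · exfalso
      have : (2 : ℂ) * u k y = 0 := by linear_combination -h
      simp [hy0] at this
    · exfalso; exact h rfl
    · norm_num
    · linear_combination -(u k y)
    · norm_num
    · linear_combination u k y
    · exfalso
      have : (2 : ℂ) * u k y = 0 := by linear_combination h
      simp [hy0] at this
    · exfalso; exact h rfl
  -- preservation of the structural conditions
  have hP : ∀ F : Finset ℕ, F ⊆ Finset.range n → (k : WithBot ℕ) < F.max →
      symmDiff F {k} ⊆ Finset.range n ∧ (k : WithBot ℕ) < (symmDiff F {k}).max := by
    intro F h1 h2
    constructor
    · intro a ha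
      rcases Finset.mem_symmDiff.mp ha with ⟨h, _⟩ | ⟨h, _⟩
      · exact h1 h
      · simp only [Finset.mem_singleton] at h
        subst h
        exact Finset.mem_range.mpr hn
    · obtain ⟨m, hmF, hm⟩ := lt_max_iff'.mp h2
      refine lt_max_iff'.mpr ⟨m, ?_, hm⟩
      refine Finset.mem_symmDiff.mpr (Or.inl ⟨hmF, ?_⟩)
      simp only [Finset.mem_singleton]
      omega
  have hcancel : ∀ F : Finset ℕ, symmDiff (symmDiff F {k}) {k} = F := fun F =>
    symmDiff_symmDiff_cancel_right {k} F
  -- the BijOn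
  have hbij : Set.BijOn (fun F => symmDiff F {k})
      {F : Finset ℕ | F ⊆ Finset.range n ∧ (k : WithBot ℕ) < F.max ∧
        (∏ m ∈ F, u m x) ≠ ∏ m ∈ F, u m y}
      {F : Finset ℕ | F ⊆ Finset.range n ∧ (k : WithBot ℕ) < F.max ∧
        (∏ m ∈ F, u m x) = ∏ m ∈ F, u m y} := by
    refine ⟨?_, ?_, ?_⟩
    · rintro F ⟨h1, h2, h3⟩
      exact ⟨(hP F h1 h2).1, (hP F h1 h2).2, (hflip F).mpr h3⟩
    · rintro F - G - h
      have := congrArg (fun S => symmDiff S {k}) h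
      simpa [hcancel] using this
    · rintro G ⟨h1, h2, h3⟩
      refine ⟨symmDiff G {k}, ⟨(hP G h1 h2).1, (hP G h1 h2).2, ?_⟩, hcancel G⟩
      intro hc
      have := (hflip (symmDiff G {k})).mp (by rwa [hcancel])
      exact this hc
  refine ⟨hbij, ?_⟩
  -- cardinality computation
  have hkn : k + 1 ≤ n := hn
  set s : Finset (Finset ℕ) := (Finset.range n).powerset with hs
  set A : Finset (Finset ℕ) := s.filter (fun F => (k : WithBot ℕ) < F.max ∧
    (∏ m ∈ F, u m x) ≠ ∏ m ∈ F, u m y) with hA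
  set B : Finset (Finset ℕ) := s.filter (fun F => (k : WithBot ℕ) < F.max ∧
    (∏ m ∈ F, u m x) = ∏ m ∈ F, u m y) with hB
  have hAset : {F : Finset ℕ | F ⊆ Finset.range n ∧ (k : WithBot ℕ) < F.max ∧
      (∏ m ∈ F, u m x) ≠ ∏ m ∈ F, u m y} = ↑A := by
    ext F
    simp [hA, hs, Finset.mem_filter, Finset.mem_powerset, and_assoc]
  have hBset : {F : Finset ℕ | F ⊆ Finset.range n ∧ (k : WithBot ℕ) < F.max ∧
      (∏ m ∈ F, u m x) = ∏ m ∈ F, u m y} = ↑B := by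
    ext F
    simp [hB, hs, Finset.mem_filter, Finset.mem_powerset, and_assoc]
  rw [hAset, hBset, Set.ncard_coe_finset, Set.ncard_coe_finset]
  -- A.card = B.card via the bijection
  have hcardAB : A.card = B.card := by
    apply Finset.card_bij (fun F _ => symmDiff F {k})
    · intro F hF
      simp only [hA, hs, Finset.mem_filter, Finset.mem_powerset] at hF
      obtain ⟨h1, h2, h3⟩ := hF
      simp only [hB, hs, Finset.mem_filter, Finset.mem_powerset]
      exact ⟨(hP F h1 h2).1, (hP F h1 h2).2, (hflip F).mpr h3⟩
    · intro F _ G _ h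
      have := congrArg (fun S => symmDiff S {k}) h
      simpa [hcancel] using this
    · intro G hG
      simp only [hB, hs, Finset.mem_filter, Finset.mem_powerset] at hG
      obtain ⟨h1, h2, h3⟩ := hG
      refine ⟨symmDiff G {k}, ?_, hcancel G⟩
      simp only [hA, hs, Finset.mem_filter, Finset.mem_powerset]
      refine ⟨(hP G h1 h2).1, (hP G h1 h2).2, ?_⟩
      intro hc
      exact (hflip (symmDiff G {k})).mp (by rwa [hcancel]) hc
  -- total count
  set C : Finset (Finset ℕ) := s.filter (fun F => (k : WithBot ℕ) < F.max) with hC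
  have hsum : A.card + B.card = C.card := by
    have h1 : A = C.filter (fun F => (∏ m ∈ F, u m x) ≠ ∏ m ∈ F, u m y) := by
      simp [hA, hC, Finset.filter_filter]
    have h2 : B = C.filter (fun F => (∏ m ∈ F, u m x) = ∏ m ∈ F, u m y) := by
      simp [hB, hC, Finset.filter_filter]
    rw [h1, h2, add_comm]
    exact Finset.card_filter_add_card_filter_not (fun F => _)
  have hCcard : C.card = 2 ^ n - 2 ^ (k + 1) := by
    have hCeq : C = s \ (Finset.range (k + 1)).powerset := by
      ext F
      simp only [hC, hs, Finset.mem_filter, Finset.mem_sdiff, Finset.mem_powerset]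
      refine and_congr_right fun _ => ?_
      rw [lt_max_iff']
      constructor
      · rintro ⟨m, hmF, hm⟩ hc
        have := Finset.mem_range.mp (hc hmF)
        omega
      · intro hc
        by_contra h
        push_neg at h
        exact hc fun a ha => Finset.mem_range.mpr (by have := h a ha; omega)
    rw [hCeq, Finset.card_sdiff_of_subset (Finset.powerset_mono.mpr (by
      intro a ha; exact Finset.mem_range.mpr (lt_of_lt_of_le (Finset.mem_range.mp ha) hkn)))]
    simp [hs, Finset.card_powerset]
  have hpow : 2 ^ n = 2 * 2 ^ (n - 1) := by
    rw [← pow_succ']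
    congr 1
    omega
  have hpowk : (2 : ℕ) ^ (k + 1) = 2 * 2 ^ k := by rw [pow_succ]; ring
  have hle : (2 : ℕ) ^ (k + 1) ≤ 2 ^ n := Nat.pow_le_pow_right (by norm_num) hkn
  have hle2 : (2 : ℕ) ^ k ≤ 2 ^ (n - 1) := Nat.pow_le_pow_right (by norm_num) (by omega)
  constructor <;> omega
end

section
/- Let n ≥ 1 and let f = Σ_{∅≠F⊆{0,...,n-1}} α_F ∏_{m∈F} u_m with α_F ∈ ℂ. Then the Lipschitz seminorm of f with respect to the Cantor metric equals max over pairs x ≠ y in 𝒞_n of 2^(k_{x,y}+1) · |Σ_{F∈σ_{x,y}} ε_{F,x,y} α_F|, where k_{x,y} is the first index of disagreement of x and y, σ_{x,y} = {F : (∏_{m∈F}u_m)(x) ≠ (∏_{m∈F}u_m)(y)}, and ε_{F,x,y} ∈ {±1} is the sign of (∏_{m∈F}u_m)(x) - (∏_{m∈F}u_m)(y). -/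
open scoped ENNReal

def CantorN (n : ℕ) : Set Cantor := {x | ∀ m, n ≤ m → x m = 0}

noncomputable def fsum (n : ℕ) (α : Finset ℕ → ℂ) (x : Cantor) : ℂ :=
  ∑ F ∈ (Finset.range n).powerset.filter (fun F => F.Nonempty), α F * ∏ m ∈ F, u m x

lemma key_id (n : ℕ) (α : Finset ℕ → ℂ) (x y : Cantor) :
    fsum n α x - fsum n α y =
    2 * ∑ F ∈ (Finset.range n).powerset.filter
        (fun F => F.Nonempty ∧ (∏ m ∈ F, u m x) ≠ ∏ m ∈ F, u m y),
      (((∏ m ∈ F, u m x) - ∏ m ∈ F, u m y) / 2) * α F := by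
  have h1 : (Finset.range n).powerset.filter
      (fun F => F.Nonempty ∧ (∏ m ∈ F, u m x) ≠ ∏ m ∈ F, u m y)
      = ((Finset.range n).powerset.filter (fun F => F.Nonempty)).filter
        (fun F => (∏ m ∈ F, u m x) ≠ ∏ m ∈ F, u m y) := by
    rw [Finset.filter_filter]
  rw [h1, Finset.mul_sum]
  have h2 : ∀ F ∈ (Finset.range n).powerset.filter (fun F => F.Nonempty),
      (2 : ℂ) * ((((∏ m ∈ F, u m x) - ∏ m ∈ F, u m y) / 2) * α F)
      = α F * ∏ m ∈ F, u m x - α F * ∏ m ∈ F, u m y := by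
    intro F _; ring
  rw [Finset.sum_filter_of_ne (fun F hF hne => ?_), Finset.sum_congr rfl h2,
    Finset.sum_sub_distrib, fsum, fsum]
  intro heq
  apply hne
  rw [heq]
  simp

def trunc (n : ℕ) (x : Cantor) : Cantor := fun m => if m < n then x m else 0

lemma trunc_mem (n : ℕ) (x : Cantor) : trunc n x ∈ CantorN n := by
  intro m hm; simp [trunc, Nat.not_lt.mpr hm]

lemma fsum_trunc (n : ℕ) (α : Finset ℕ → ℂ) (x : Cantor) :
    fsum n α (trunc n x) = fsum n α x := by
  apply Finset.sum_congr rfl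
  intro F hF
  simp only [Finset.mem_filter, Finset.mem_powerset] at hF
  congr 1
  apply Finset.prod_congr rfl
  intro m hm
  have : m < n := Finset.mem_range.mp (hF.1 hm)
  simp [u, trunc, this]

lemma ratio_eq (x y : Cantor) (h : x ≠ y) (a : ℝ) :
    ENNReal.ofReal a / dC x y = ENNReal.ofReal a * 2 ^ firstDiff x y h := by
  rw [dC, dif_neg h, div_eq_mul_inv, ← ENNReal.inv_pow, inv_inv]

lemma expr_eq (n : ℕ) (α : Finset ℕ → ℂ) (x y : Cantor) (h : x ≠ y) :
    ENNReal.ofReal ((2 : ℝ) ^ (firstDiff x y h + 1) *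
      ‖∑ F ∈ (Finset.range n).powerset.filter
          (fun F => F.Nonempty ∧ (∏ m ∈ F, u m x) ≠ ∏ m ∈ F, u m y),
        (((∏ m ∈ F, u m x) - ∏ m ∈ F, u m y) / 2) * α F‖)
    = ENNReal.ofReal (‖fsum n α x - fsum n α y‖) * 2 ^ firstDiff x y h := by
  rw [key_id n α x y, norm_mul, Complex.norm_two]
  rw [pow_succ, show ∀ a b : ℝ, a * 2 * b = (2 * b) * a by intros; ring]
  rw [ENNReal.ofReal_mul (by positivity), ENNReal.ofReal_pow (by norm_num)]
  rw [ENNReal.ofReal_ofNat, mul_comm]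

open Classical in
theorem lip_formula (n : ℕ) (hn : 1 ≤ n) (α : Finset ℕ → ℂ) :
    LipC (fun x => ∑ F ∈ (Finset.range n).powerset.filter (fun F => F.Nonempty),
        α F * ∏ m ∈ F, u m x)
      = ⨆ (x : Cantor) (_ : x ∈ CantorN n) (y : Cantor) (_ : y ∈ CantorN n) (h : x ≠ y),
          ENNReal.ofReal ((2 : ℝ) ^ (firstDiff x y h + 1) *
            ‖∑ F ∈ (Finset.range n).powerset.filter
                (fun F => F.Nonempty ∧ (∏ m ∈ F, u m x) ≠ ∏ m ∈ F, u m y),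
              (((∏ m ∈ F, u m x) - ∏ m ∈ F, u m y) / 2) * α F‖) := by
  show LipC (fsum n α) = _
  rw [LipC]
  apply le_antisymm
  · refine iSup_le fun x => iSup_le fun y => iSup_le fun h => ?_
    by_cases hf : fsum n α x = fsum n α y
    · simp [hf]
    · set x' := trunc n x with hx'def
      set y' := trunc n y with hy'def
      have hx' : fsum n α x' = fsum n α x := fsum_trunc n α x
      have hy' : fsum n α y' = fsum n α y := fsum_trunc n α y
      have h' : x' ≠ y' := fun e => hf (by rw [← hx', ← hy', e])
      have hk : firstDiff x y h ≤ firstDiff x' y' h' := by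
        have hs : x' (firstDiff x' y' h') ≠ y' (firstDiff x' y' h') :=
          Nat.find_spec (Function.ne_iff.mp h')
        have hk'n : firstDiff x' y' h' < n := by
          by_contra hge
          push_neg at hge
          exact hs (show trunc n x _ = trunc n y _ by simp [trunc, Nat.not_lt.mpr hge])
        have hxy : x (firstDiff x' y' h') ≠ y (firstDiff x' y' h') := by
          have hs2 : trunc n x (firstDiff x' y' h') ≠ trunc n y (firstDiff x' y' h') := hs
          simpa [trunc, hk'n] using hs2
        exact Nat.find_le hxy
      calc ENNReal.ofReal (‖fsum n α x - fsum n α y‖) / dC x y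
          = ENNReal.ofReal (‖fsum n α x - fsum n α y‖) * 2 ^ firstDiff x y h :=
            ratio_eq x y h _
        _ ≤ ENNReal.ofReal (‖fsum n α x' - fsum n α y'‖) * 2 ^ firstDiff x' y' h' := by
            rw [hx', hy']
            exact mul_le_mul_right (pow_le_pow_right₀ one_le_two hk) _
        _ = ENNReal.ofReal ((2 : ℝ) ^ (firstDiff x' y' h' + 1) *
              ‖∑ F ∈ (Finset.range n).powerset.filter
                  (fun F => F.Nonempty ∧ (∏ m ∈ F, u m x') ≠ ∏ m ∈ F, u m y'),
                (((∏ m ∈ F, u m x') - ∏ m ∈ F, u m y') / 2) * α F‖) :=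
            (expr_eq n α x' y' h').symm
        _ ≤ _ := by
            refine le_iSup_of_le x' (le_iSup_of_le (trunc_mem n x) (le_iSup_of_le y'
              (le_iSup_of_le (trunc_mem n y) ?_)))
            exact le_iSup (fun (h : x' ≠ y') => ENNReal.ofReal ((2 : ℝ) ^ (firstDiff x' y' h + 1) *
              ‖∑ F ∈ (Finset.range n).powerset.filter
                  (fun F => F.Nonempty ∧ (∏ m ∈ F, u m x') ≠ ∏ m ∈ F, u m y'),
                (((∏ m ∈ F, u m x') - ∏ m ∈ F, u m y') / 2) * α F‖)) h'
  · refine iSup_le fun x => iSup_le fun _ => iSup_le fun y => iSup_le fun _ =>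
      iSup_le fun h => ?_
    rw [expr_eq n α x y h, ← ratio_eq x y h]
    exact le_iSup_of_le x (le_iSup_of_le y (le_iSup (fun (_ : x ≠ y) =>
      ENNReal.ofReal (‖fsum n α x - fsum n α y‖) / dC x y) h))
end

section
/- The Lipschitz seminorm of f = 4u_0 + u_1 + u_0u_1 on the Cantor space equals 10, while the quantity L'(f) = max{2‖f - E_0 f‖_∞, 4‖f - E_1 f‖_∞} (with E_0 f = 0, E_1 f = 4u_0) equals 12; hence the two seminorms differ on this element. -/
open scoped ENNReal

noncomputable def supNorm (g : Cantor → ℂ) : ℝ := ⨆ x : Cantor, ‖g x‖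

lemma u_eq (n : ℕ) (x : Cantor) : u n x = -1 ∨ u n x = 1 := by
  have : x n = 0 ∨ x n = 1 := by omega
  rcases this with h | h <;> rw [u, h] <;> norm_num

lemma u_congr (n : ℕ) {x y : Cantor} (h : x n = y n) : u n x = u n y := by
  simp [u, h]

lemma abs10 (x y : Cantor) :
    ‖((4 * u 0 x + u 1 x + u 0 x * u 1 x) - (4 * u 0 y + u 1 y + u 0 y * u 1 y))‖ ≤ 10 := by
  rcases u_eq 0 x with h1 | h1 <;> rcases u_eq 1 x with h2 | h2 <;>
    rcases u_eq 0 y with h3 | h3 <;> rcases u_eq 1 y with h4 | h4 <;>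
    rw [h1, h2, h3, h4] <;> norm_num

lemma abs4 (x y : Cantor) (h0 : u 0 x = u 0 y) :
    ‖((4 * u 0 x + u 1 x + u 0 x * u 1 x) - (4 * u 0 y + u 1 y + u 0 y * u 1 y))‖ ≤ 4 := by
  rw [← h0]
  rcases u_eq 0 x with h1 | h1 <;> rcases u_eq 1 x with h2 | h2 <;>
    rcases u_eq 1 y with h4 | h4 <;>
    rw [h1, h2, h4] <;> norm_num

theorem lip_norms_differ :
    LipC (fun x => 4 * u 0 x + u 1 x + u 0 x * u 1 x) = 10 ∧
    max (2 * supNorm (fun x => (4 * u 0 x + u 1 x + u 0 x * u 1 x) - 0))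
        (4 * supNorm (fun x => (4 * u 0 x + u 1 x + u 0 x * u 1 x) - 4 * u 0 x)) = 12 := by
  constructor
  · -- LipC part
    apply le_antisymm
    · -- upper bound
      apply iSup_le; intro x
      apply iSup_le; intro y
      apply iSup_le; intro hxy
      set m := firstDiff x y hxy with hm
      have hd : dC x y = 2⁻¹ ^ m := dif_neg hxy
      have hlt : ∀ k < m, x k = y k := fun k hk =>
        not_not.mp (Nat.find_min (Function.ne_iff.mp hxy) hk)
      match hm' : m with
      | 0 =>
        rw [hd]
        simp only [pow_zero, div_one]
        calc ENNReal.ofReal _ ≤ ENNReal.ofReal 10 :=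
              ENNReal.ofReal_le_ofReal (abs10 x y)
          _ = 10 := by norm_num
      | 1 =>
        have h0 : u 0 x = u 0 y := u_congr 0 (hlt 0 (by omega))
        rw [hd]
        simp only [pow_one, div_eq_mul_inv, inv_inv]
        calc ENNReal.ofReal _ * 2 ≤ ENNReal.ofReal 4 * 2 := by
              gcongr
              exact abs4 x y h0
          _ ≤ 10 := by norm_num
      | (k+2) =>
        have h0 : u 0 x = u 0 y := u_congr 0 (hlt 0 (by omega))
        have h1 : u 1 x = u 1 y := u_congr 1 (hlt 1 (by omega))
        simp only [h0, h1, sub_self, map_zero, norm_zero, ENNReal.ofReal_zero, ENNReal.zero_div]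
        exact zero_le
    · -- lower bound: witnesses
      set x : Cantor := fun _ => 1 with hx
      set y : Cantor := fun _ => 0 with hy
      have hxy : x ≠ y := by
        intro h
        have := congrFun h 0
        simp [hx, hy] at this
      have hfd : firstDiff x y hxy = 0 := by
        rw [firstDiff, Nat.find_eq_zero]
        simp [hx, hy]
      have hd : dC x y = 1 := by
        rw [dC, dif_neg hxy, hfd, pow_zero]
      have hux : ∀ n, u n x = 1 := by intro n; simp only [u, hx]; norm_num
      have huy : ∀ n, u n y = -1 := by intro n; simp only [u, hy]; norm_num
      have key : ENNReal.ofReal (‖((4 * u 0 x + u 1 x + u 0 x * u 1 x) - (4 * u 0 y + u 1 y + u 0 y * u 1 y))‖) / dC x y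
          = 10 := by
        rw [hux, hux, huy, huy, hd, div_one]
        norm_num
      calc (10 : ℝ≥0∞) = _ := key.symm
        _ ≤ LipC (fun x => 4 * u 0 x + u 1 x + u 0 x * u 1 x) := by
            apply le_iSup_of_le x
            apply le_iSup_of_le y
            exact le_iSup_of_le hxy le_rfl
  · -- supNorm part
    have h1 : supNorm (fun x => (4 * u 0 x + u 1 x + u 0 x * u 1 x) - 0) = 6 := by
      apply le_antisymm
      · apply Real.iSup_le _ (by norm_num)
        intro x
        rcases u_eq 0 x with h1 | h1 <;> rcases u_eq 1 x with h2 | h2 <;>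
          simp only [h1, h2] <;> norm_num
      · have : ‖((4 * u 0 (fun _ => 1) + u 1 (fun _ => 1)
            + u 0 (fun _ => 1) * u 1 (fun _ => 1)) - 0)‖ = 6 := by
          have hux : ∀ n, u n (fun _ => (1 : Fin 2)) = 1 := by intro n; simp only [u]; norm_num
          rw [hux, hux]; norm_num
        rw [← this]
        apply le_ciSup (f := fun x : Cantor => ‖((4 * u 0 x + u 1 x + u 0 x * u 1 x) - 0)‖)
        refine ⟨6, ?_⟩
        rintro r ⟨x, rfl⟩
        rcases u_eq 0 x with h1 | h1 <;> rcases u_eq 1 x with h2 | h2 <;>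
          simp only [h1, h2] <;> norm_num
    have h2 : supNorm (fun x => (4 * u 0 x + u 1 x + u 0 x * u 1 x) - 4 * u 0 x) = 2 := by
      apply le_antisymm
      · apply Real.iSup_le _ (by norm_num)
        intro x
        rcases u_eq 0 x with h1 | h1 <;> rcases u_eq 1 x with h2 | h2 <;>
          simp only [h1, h2] <;> norm_num
      · have : ‖((4 * u 0 (fun _ => 1) + u 1 (fun _ => 1)
            + u 0 (fun _ => 1) * u 1 (fun _ => 1)) - 4 * u 0 (fun _ => 1))‖ = 2 := by
          have hux : ∀ n, u n (fun _ => (1 : Fin 2)) = 1 := by intro n; simp only [u]; norm_num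
          rw [hux, hux]; norm_num
        rw [← this]
        apply le_ciSup (f := fun x : Cantor =>
          ‖((4 * u 0 x + u 1 x + u 0 x * u 1 x) - 4 * u 0 x)‖)
        refine ⟨2, ?_⟩
        rintro r ⟨x, rfl⟩
        rcases u_eq 0 x with h1 | h1 <;> rcases u_eq 1 x with h2 | h2 <;>
          simp only [h1, h2] <;> norm_num
    rw [h1, h2]
    norm_num
end

section
/- For any α_0, α_1, α_2 ∈ ℂ, letting M₁ = max{2|α_0-α_2|, 2|α_0-α_1|, 2|α_0+α_1|, 2|α_0+α_2|, 4|α_1-α_2|, 4|α_1+α_2|} and M₂ = max{2|α_0+α_1-α_2|, 2|α_0-α_1+α_2|, 2|α_0-α_1-α_2|, 2|α_0+α_1+α_2|, 4|α_1-α_2|, 4|α_1+α_2|}, it holds that M₁ ≤ M₂ ≤ 2M₁. -/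
private lemma tri_helper (x y z : ℂ) (hz : x + y = 2 * z) :
    2 * ‖z‖ ≤ ‖x‖ + ‖y‖ := by
  have h := norm_add_le x y
  rw [hz, norm_mul, Complex.norm_two] at h
  exact h

theorem lip_norms_equivalent_A2 (α₀ α₁ α₂ : ℂ) :
    max (max (max (2 * ‖α₀ - α₂‖) (2 * ‖α₀ - α₁‖))
        (max (2 * ‖α₀ + α₁‖) (2 * ‖α₀ + α₂‖)))
      (max (4 * ‖α₁ - α₂‖) (4 * ‖α₁ + α₂‖)) ≤
      max (max (max (2 * ‖α₀ + α₁ - α₂‖) (2 * ‖α₀ - α₁ + α₂‖))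
          (max (2 * ‖α₀ - α₁ - α₂‖) (2 * ‖α₀ + α₁ + α₂‖)))
        (max (4 * ‖α₁ - α₂‖) (4 * ‖α₁ + α₂‖)) ∧
    max (max (max (2 * ‖α₀ + α₁ - α₂‖) (2 * ‖α₀ - α₁ + α₂‖))
        (max (2 * ‖α₀ - α₁ - α₂‖) (2 * ‖α₀ + α₁ + α₂‖)))
      (max (4 * ‖α₁ - α₂‖) (4 * ‖α₁ + α₂‖)) ≤
      2 * max (max (max (2 * ‖α₀ - α₂‖) (2 * ‖α₀ - α₁‖))
          (max (2 * ‖α₀ + α₁‖) (2 * ‖α₀ + α₂‖)))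
        (max (4 * ‖α₁ - α₂‖) (4 * ‖α₁ + α₂‖)) := by
  set a1 := ‖α₀ - α₂‖ with ha1
  set a2 := ‖α₀ - α₁‖ with ha2
  set a3 := ‖α₀ + α₁‖ with ha3
  set a4 := ‖α₀ + α₂‖ with ha4
  set b1 := ‖α₀ + α₁ - α₂‖ with hb1
  set b2 := ‖α₀ - α₁ + α₂‖ with hb2
  set b3 := ‖α₀ - α₁ - α₂‖ with hb3
  set b4 := ‖α₀ + α₁ + α₂‖ with hb4
  set c1 := ‖α₁ - α₂‖ with hc1
  set c2 := ‖α₁ + α₂‖ with hc2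
  set m1 := max (max (max (2 * a1) (2 * a2)) (max (2 * a3) (2 * a4)))
      (max (4 * c1) (4 * c2)) with hm1
  set m2 := max (max (max (2 * b1) (2 * b2)) (max (2 * b3) (2 * b4)))
      (max (4 * c1) (4 * c2)) with hm2
  -- basic max facts
  have hm2b1 : 2 * b1 ≤ m2 := le_max_of_le_left (le_max_of_le_left (le_max_left _ _))
  have hm2b2 : 2 * b2 ≤ m2 := le_max_of_le_left (le_max_of_le_left (le_max_right _ _))
  have hm2b3 : 2 * b3 ≤ m2 := le_max_of_le_left (le_max_of_le_right (le_max_left _ _))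
  have hm2b4 : 2 * b4 ≤ m2 := le_max_of_le_left (le_max_of_le_right (le_max_right _ _))
  have hm1a2 : 2 * a2 ≤ m1 := le_max_of_le_left (le_max_of_le_left (le_max_right _ _))
  have hm1a3 : 2 * a3 ≤ m1 := le_max_of_le_left (le_max_of_le_right (le_max_left _ _))
  have hm1a4 : 2 * a4 ≤ m1 := le_max_of_le_left (le_max_of_le_right (le_max_right _ _))
  have hm1c1 : 4 * c1 ≤ m1 := le_max_of_le_right (le_max_left _ _)
  have hm1c2 : 4 * c2 ≤ m1 := le_max_of_le_right (le_max_right _ _)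
  -- triangle inequalities: M1 terms vs M2 terms
  have t1 : 2 * a1 ≤ b1 + b3 := tri_helper _ _ _ (by ring)
  have t2 : 2 * a2 ≤ b2 + b3 := tri_helper _ _ _ (by ring)
  have t3 : 2 * a3 ≤ b1 + b4 := tri_helper _ _ _ (by ring)
  have t4 : 2 * a4 ≤ b2 + b4 := tri_helper _ _ _ (by ring)
  -- 2|α₁| ≤ c1 + c2 and 2|α₂| ≤ c1 + c2
  have s1 : 2 * ‖α₁‖ ≤ c1 + c2 :=
    tri_helper (α₁ - α₂) (α₁ + α₂) α₁ (by ring)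
  have s2 : 2 * ‖α₂‖ ≤ c2 + c1 := by
    have h := tri_helper (α₁ + α₂) (α₂ - α₁) α₂ (by ring)
    rwa [show ‖α₂ - α₁‖ = c1 from norm_sub_rev α₂ α₁] at h
  -- b terms vs a terms plus |α₁| or |α₂|
  have u1 : b1 ≤ a3 + ‖α₂‖ := by
    have h := norm_add_le (α₀ + α₁) (-α₂)
    rw [norm_neg] at h
    rw [hb1, ha3, sub_eq_add_neg]
    exact h
  have u2 : b2 ≤ a4 + ‖α₁‖ := by
    have h := norm_add_le (α₀ + α₂) (-α₁)
    rw [norm_neg] at h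
    rw [hb2, ha4, show α₀ - α₁ + α₂ = α₀ + α₂ + -α₁ from by ring]
    exact h
  have u3 : b3 ≤ a2 + ‖α₂‖ := by
    have h := norm_add_le (α₀ - α₁) (-α₂)
    rw [norm_neg] at h
    rw [hb3, ha2, show α₀ - α₁ - α₂ = α₀ - α₁ + -α₂ from by ring]
    exact h
  have u4 : b4 ≤ a3 + ‖α₂‖ := by
    rw [hb4, ha3]
    exact norm_add_le (α₀ + α₁) α₂
  have hc1nn : (0:ℝ) ≤ c1 := norm_nonneg _
  have hm1nn : (0:ℝ) ≤ m1 := le_trans (by linarith) hm1c1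
  constructor
  · refine max_le (max_le (max_le ?_ ?_) (max_le ?_ ?_)) (le_max_right _ _)
    · linarith
    · linarith
    · linarith
    · linarith
  · refine max_le (max_le (max_le ?_ ?_) (max_le ?_ ?_))
      (max_le (by linarith) (by linarith))
    · linarith
    · linarith
    · linarith
    · linarith
end
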